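/- The number of parking functions of length n is (n+1)^(n-1). -/
import Mathlib

namespace PkAux

variable {n : ℕ}

/-- Circular analogue of parking condition for words over `ZMod (n+1)`. -/
def P {n : ℕ} (w : Fin n → ZMod (n+1)) : Prop :=
  ∀ i : ℕ, 1 ≤ i → i ≤ n → i ≤ (Finset.univ.filter (fun j => (w j).val < i)).card

/-- number of letters equal to `k` -/
def a (v : Fin n → ZMod (n+1)) (k : ZMod (n+1)) : ℕ :=
  (Finset.univ.filter (fun j => v j = k)).card

/-- prefix-sum function -/
def T (v : Fin n → ZMod (n+1)) (i : ℕ) : ℤ :=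
  (∑ t ∈ Finset.range i, (a v (t : ZMod (n+1)) : ℤ)) - i

lemma sum_a (v : Fin n → ZMod (n+1)) : ∑ k : ZMod (n+1), a v k = n := by
  have := Finset.card_eq_sum_card_fiberwise (f := v) (s := Finset.univ)
    (t := Finset.univ) (fun x _ => Finset.mem_univ _)
  simpa [a, Finset.card_univ] using this.symm

lemma sum_period (v : Fin n → ZMod (n+1)) (i : ℕ) :
    ∑ t ∈ Finset.range (n+1), a v ((i + t : ℕ) : ZMod (n+1)) = n := by
  refine Eq.trans ?_ (sum_a v)
  apply Finset.sum_nbij' (i := fun t => ((i + t : ℕ) : ZMod (n+1)))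
    (j := fun k => (k - (i : ZMod (n+1))).val)
  · intro t ht; exact Finset.mem_univ _
  · intro k hk; exact Finset.mem_range.mpr (ZMod.val_lt _)
  · intro t ht
    push_cast
    rw [add_sub_cancel_left, ZMod.val_cast_of_lt (Finset.mem_range.mp ht)]
  · intro k hk
    push_cast
    rw [ZMod.natCast_val, ZMod.cast_id, add_sub_cancel]
  · intro t ht; rfl

lemma T_period (v : Fin n → ZMod (n+1)) (i : ℕ) :
    T v (i + (n+1)) = T v i - 1 := by
  unfold T
  rw [Finset.sum_range_add]
  have h : ∑ t ∈ Finset.range (n+1), (a v ((i + t : ℕ) : ZMod (n+1)) : ℤ) = (n : ℤ) := by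
    exact_mod_cast congrArg (Nat.cast : ℕ → ℤ) (sum_period v i)
  push_cast at h ⊢
  rw [h]; ring

/-- the count of letters of `v + c` below `i`, as a window sum of `a`. -/
lemma count_eq (v : Fin n → ZMod (n+1)) (c : ZMod (n+1)) (i : ℕ) (hi : i ≤ n) :
    (Finset.univ.filter (fun j => (v j + c).val < i)).card
      = ∑ t ∈ Finset.range i, a v (((-c).val + t : ℕ) : ZMod (n+1)) := by
  rw [Finset.card_eq_sum_card_fiberwise (f := fun j => (v j + c).val)
    (t := Finset.range i) (fun x hx => Finset.mem_range.mpr (Finset.mem_filter.mp hx).2)]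
  apply Finset.sum_congr rfl
  intro t ht
  have ht' : t < n + 1 := lt_of_lt_of_le (Finset.mem_range.mp ht) (Nat.le_succ_of_le hi)
  congr 1
  ext j
  simp only [Finset.mem_filter, Finset.mem_univ, true_and, a]
  constructor
  · rintro ⟨_, h2⟩
    have hvt : v j + c = (t : ZMod (n+1)) :=
      ZMod.val_injective _ (by rw [ZMod.val_cast_of_lt ht', h2])
    push_cast
    rw [ZMod.natCast_val, ZMod.cast_id]
    linear_combination hvt
  · intro h
    have hvt : v j + c = (t : ZMod (n+1)) := by
      push_cast at h
      rw [ZMod.natCast_val, ZMod.cast_id] at h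
      linear_combination h
    constructor
    · rw [hvt, ZMod.val_cast_of_lt ht']
      exact Finset.mem_range.mp ht
    · rw [hvt, ZMod.val_cast_of_lt ht']

lemma window_sum (v : Fin n → ZMod (n+1)) (r i : ℕ) :
    (∑ t ∈ Finset.range i, (a v ((r + t : ℕ) : ZMod (n+1)) : ℤ))
      = T v (r + i) - T v r + i := by
  unfold T
  rw [Finset.sum_range_add]
  push_cast
  ring

/-- goodness of a starting point -/
def Good (v : Fin n → ZMod (n+1)) (r : ℕ) : Prop :=
  ∀ i : ℕ, 1 ≤ i → i ≤ n → T v r ≤ T v (r + i)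

lemma P_shift_iff (v : Fin n → ZMod (n+1)) (c : ZMod (n+1)) :
    P (fun j => v j + c) ↔ Good v (-c).val := by
  unfold P Good
  apply forall_congr'; intro i
  apply imp_congr_right; intro _
  apply imp_congr_right; intro hi
  rw [count_eq v c i hi]
  set r := (-c).val
  constructor
  · intro h
    have := window_sum v r i
    have h' : (i : ℤ) ≤ ∑ t ∈ Finset.range i, (a v ((r + t : ℕ) : ZMod (n+1)) : ℤ) := by
      exact_mod_cast h
    linarith [this ▸ h']
  · intro h
    have h' : (i : ℤ) ≤ ∑ t ∈ Finset.range i, (a v ((r + t : ℕ) : ZMod (n+1)) : ℤ) := by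
      rw [window_sum]; linarith
    exact_mod_cast h'

lemma exists_good (v : Fin n → ZMod (n+1)) : ∃ r ≤ n, Good v r := by
  classical
  have hne : (Finset.range (n+1)).Nonempty := ⟨0, by simp⟩
  obtain ⟨m, hm, hmin⟩ := Finset.exists_min_image (Finset.range (n+1)) (T v) hne
  -- take least minimizer
  have hQ : ∃ r, r ≤ n ∧ ∀ s ≤ n, T v r ≤ T v s := by
    refine ⟨m, Nat.lt_succ_iff.mp (Finset.mem_range.mp hm), fun s hs => ?_⟩
    exact hmin s (Finset.mem_range.mpr (Nat.lt_succ_of_le hs))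
  classical
  let r := Nat.find hQ
  obtain ⟨hrn, hrmin⟩ := Nat.find_spec hQ
  refine ⟨r, hrn, ?_⟩
  intro i hi1 hin
  by_cases hcase : r + i ≤ n
  · exact hrmin _ hcase
  · push_neg at hcase
    have hs : r + i = (r + i - (n+1)) + (n+1) := by omega
    set s := r + i - (n+1) with hsdef
    have hslt : s < r := by omega
    have hsn : s ≤ n := by omega
    have hnotQ : ¬ (s ≤ n ∧ ∀ s' ≤ n, T v s ≤ T v s') := Nat.find_min hQ hslt
    have : ∃ s' ≤ n, T v s' < T v s := by
      by_contra hcon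
      push_neg at hcon
      exact hnotQ ⟨hsn, fun s' hs' => le_of_not_gt (fun hl => absurd hl (not_lt.mpr (hcon s' hs')))⟩
    obtain ⟨s', hs'n, hs'⟩ := this
    have h1 : T v r ≤ T v s' := hrmin s' hs'n
    have h2 : T v (r + i) = T v s - 1 := by rw [hs]; exact T_period v s
    omega

lemma good_unique (v : Fin n → ZMod (n+1)) {r r' : ℕ} (hr : r ≤ n) (hr' : r' ≤ n)
    (hg : Good v r) (hg' : Good v r') : r = r' := by
  by_contra hne
  -- wlog r < r'
  wlog hlt : r < r' generalizing r r'
  · exact this hr' hr hg' hg (Ne.symm hne) (by omega)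
  have h1 : T v r ≤ T v r' := by
    have := hg (r' - r) (by omega) (by omega)
    rwa [Nat.add_sub_cancel' (le_of_lt hlt)] at this
  have h2 : T v r' ≤ T v (r + (n+1)) := by
    have := hg' (r + (n+1) - r') (by omega) (by omega)
    rwa [Nat.add_sub_cancel' (by omega)] at this
  have h3 : T v (r + (n+1)) = T v r - 1 := T_period v r
  omega

lemma existsUnique_shift (v : Fin n → ZMod (n+1)) :
    ∃! c : ZMod (n+1), P (fun j => v j + c) := by
  obtain ⟨r, hrn, hg⟩ := exists_good v
  refine ⟨-(r : ZMod (n+1)), ?_, ?_⟩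
  · show P (fun j => v j + -(r : ZMod (n+1)))
    rw [P_shift_iff]
    rw [neg_neg, ZMod.val_cast_of_lt (by omega)]
    exact hg
  · intro c hc
    rw [P_shift_iff] at hc
    have hval : (-c).val ≤ n := Nat.lt_succ_iff.mp (ZMod.val_lt _)
    have := good_unique v hval hrn hc hg
    have : ((-c).val : ZMod (n+1)) = (r : ZMod (n+1)) := by rw [this]
    rw [ZMod.natCast_val, ZMod.cast_id] at this
    rw [← neg_neg c, this]

/-- The key orbit-counting equivalence. -/
noncomputable def orbitEquiv (n : ℕ) :
    {w : Fin n → ZMod (n+1) // P w} × ZMod (n+1) ≃ (Fin n → ZMod (n+1)) := by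
  apply Equiv.ofBijective (fun p => fun j => p.1.1 j + p.2)
  constructor
  · rintro ⟨⟨w, hw⟩, c⟩ ⟨⟨w', hw'⟩, c'⟩ h
    simp only at h
    have hfun : ∀ j, w j + c = w' j + c' := fun j => congrFun h j
    have hw'eq : ∀ j, w' j = w j + (c - c') := by
      intro j; have := hfun j; linear_combination -this
    have hP1 : P (fun j => w j + (0 : ZMod (n+1))) := by simpa using hw
    have hP2 : P (fun j => w j + (c - c')) := by
      have : (fun j => w j + (c - c')) = w' := by funext j; rw [hw'eq j]
      rw [this]; exact hw'
    obtain ⟨cu, _, huniq⟩ := existsUnique_shift w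
    have h0 : (0 : ZMod (n+1)) = cu := huniq 0 hP1
    have hd : c - c' = cu := huniq _ hP2
    have hcc : c = c' := by
      have : c - c' = 0 := by rw [hd, ← h0]
      linear_combination this
    subst hcc
    have : w = w' := by funext j; have := hfun j; linear_combination this
    subst this
    rfl
  · intro v
    obtain ⟨c, hc, _⟩ := existsUnique_shift v
    refine ⟨⟨⟨fun j => v j + c, hc⟩, -c⟩, ?_⟩
    funext j; simp

lemma card_P (n : ℕ) :
    Nat.card {w : Fin n → ZMod (n+1) // P w} * (n+1) = (n+1)^n := by
  have h := Nat.card_congr (orbitEquiv n)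
  rw [Nat.card_prod] at h
  have h1 : Nat.card (ZMod (n+1)) = n + 1 := by
    rw [Nat.card_eq_fintype_card, ZMod.card]
  have h2 : Nat.card (Fin n → ZMod (n+1)) = (n+1)^n := by
    rw [Nat.card_eq_fintype_card, Fintype.card_fun, ZMod.card, Fintype.card_fin]
  rw [h1, h2] at h
  exact h

end PkAux

/-- A parking function of length `n`: a word `u : Fin n → ℕ+` such that for each
`i ∈ [n]`, the number of letters `≤ i` is at least `i`. -/
def IsParkingFn {n : ℕ} (u : Fin n → ℕ+) : Prop :=
  ∀ i : ℕ, 1 ≤ i → i ≤ n → i ≤ (Finset.univ.filter (fun j => (u j : ℕ) ≤ i)).card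

namespace PkAux

lemma park_le {n : ℕ} {u : Fin n → ℕ+} (hu : IsParkingFn u) (hn : 1 ≤ n) (j : Fin n) :
    (u j : ℕ) ≤ n := by
  have h := hu n hn le_rfl
  have heq : (Finset.univ.filter (fun j => (u j : ℕ) ≤ n)) = Finset.univ := by
    apply Finset.eq_univ_of_card
    have hle := Finset.card_le_univ (Finset.univ.filter (fun j : Fin n => (u j : ℕ) ≤ n))
    simp only [Finset.card_univ, Fintype.card_fin] at *
    omega
  have hj := Finset.eq_univ_iff_forall.mp heq j
  simpa using (Finset.mem_filter.mp hj).2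

noncomputable def parkEquiv (n : ℕ) (hn : 1 ≤ n) :
    {u : Fin n → ℕ+ // IsParkingFn u} ≃ {w : Fin n → ZMod (n+1) // P w} where
  toFun u := ⟨fun j => (((u.1 j : ℕ) - 1 : ℕ) : ZMod (n+1)), by
    intro i h1 hi
    have hval : ∀ j, ((((u.1 j : ℕ) - 1 : ℕ) : ZMod (n+1))).val = (u.1 j : ℕ) - 1 := fun j =>
      ZMod.val_cast_of_lt (by have := park_le u.2 hn j; omega)
    refine le_trans (u.2 i h1 hi) (le_of_eq ?_)
    congr 1
    ext j
    simp only [Finset.mem_filter, Finset.mem_univ, true_and, hval]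
    have h1j : 1 ≤ (u.1 j : ℕ) := (u.1 j).one_le
    omega⟩
  invFun w := ⟨fun j => ⟨(w.1 j).val + 1, Nat.succ_pos _⟩, by
    intro i h1 hi
    refine le_trans (w.2 i h1 hi) (le_of_eq ?_)
    congr 1⟩
  left_inv u := by
    apply Subtype.ext
    funext j
    apply PNat.coe_injective
    show ((((u.1 j : ℕ) - 1 : ℕ) : ZMod (n+1))).val + 1 = (u.1 j : ℕ)
    rw [ZMod.val_cast_of_lt (by have := park_le u.2 hn j; omega)]
    have h1j : 1 ≤ (u.1 j : ℕ) := (u.1 j).one_le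
    omega
  right_inv w := by
    apply Subtype.ext
    funext j
    show ((((w.1 j).val + 1) - 1 : ℕ) : ZMod (n+1)) = w.1 j
    rw [Nat.add_sub_cancel, ZMod.natCast_val, ZMod.cast_id]

end PkAux

/-- The number of parking functions of length `n` is `(n+1)^(n-1)`. -/
theorem numParkingFunctions (n : ℕ) :
    Nat.card {u : Fin n → ℕ+ // IsParkingFn u} = (n + 1) ^ (n - 1) := by
  rcases Nat.eq_zero_or_pos n with h0 | hn
  · subst h0
    have h1 : Nat.card {u : Fin 0 → ℕ+ // IsParkingFn u} = 1 := by
      rw [Nat.card_eq_one_iff_unique]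
      constructor
      · constructor
        rintro ⟨u, _⟩ ⟨v, _⟩
        apply Subtype.ext
        funext j
        exact j.elim0
      · exact ⟨⟨fun j => j.elim0, fun i hi h0' => by omega⟩⟩
    simpa using h1
  · have hcong := Nat.card_congr (PkAux.parkEquiv n hn)
    rw [hcong]
    have hpow : (n+1)^(n-1) * (n+1) = (n+1)^n := by
      rw [← pow_succ]
      congr 1
      omega
    exact Nat.eq_of_mul_eq_mul_right (Nat.succ_pos n) (by rw [PkAux.card_P n, ← hpow])
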